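/- Let 1 < p < 2. Then for all x, y in ℓ^p(ℕ) (complex sequences with summable p-th power of modulus), ‖x + y‖_p² + (p − 1)‖x − y‖_p² ≤ 2(‖x‖_p² + ‖y‖_p²). -/

import Mathlib

open Real Set
open scoped ENNReal NNReal

namespace BynumDrewAux

lemma two_le_rpow_add_rpow {t s : ℝ} (ht0 : 0 ≤ t) (ht1 : t < 1) (hs : s ≤ 0) :
    2 ≤ (1 + t) ^ s + (1 - t) ^ s := by
  have h1 : (0:ℝ) < 1 + t := by linarith
  have h2 : (0:ℝ) < 1 - t := by linarith
  set X := (1 + t) ^ (s / 2) with hX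
  set Y := (1 - t) ^ (s / 2) with hY
  have hXY : 1 ≤ X * Y := by
    rw [hX, hY, ← Real.mul_rpow h1.le h2.le]
    apply Real.one_le_rpow_of_pos_of_le_one_of_nonpos
    · nlinarith
    · nlinarith
    · linarith
  have hXX : X * X = (1 + t) ^ s := by
    rw [hX, ← Real.rpow_add h1]; norm_num
  have hYY : Y * Y = (1 - t) ^ s := by
    rw [hY, ← Real.rpow_add h2]; norm_num
  nlinarith [sq_nonneg (X - Y)]

lemma key_ineq {p : ℝ} (hp1 : 1 < p) (hp2 : p < 2) {t : ℝ} (ht0 : 0 ≤ t) (ht1 : t ≤ 1) :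
    2 + p * (p - 1) * t ^ 2 ≤ (1 + t) ^ p + (1 - t) ^ p := by
  have hp0 : (0:ℝ) < p := by linarith
  set h : ℝ → ℝ := fun t => p * (1 + t) ^ (p - 1) - p * (1 - t) ^ (p - 1) - 2 * p * (p - 1) * t
    with hh
  set g : ℝ → ℝ := fun t => (1 + t) ^ p + (1 - t) ^ p - (2 + p * (p - 1) * t ^ 2) with hg
  have c1 : Continuous fun t : ℝ => (1 + t) ^ (p - 1) :=
    (Real.continuous_rpow_const (by linarith)).comp (continuous_const.add continuous_id)
  have c2 : Continuous fun t : ℝ => (1 - t) ^ (p - 1) :=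
    (Real.continuous_rpow_const (by linarith)).comp (continuous_const.sub continuous_id)
  have c3 : Continuous fun t : ℝ => (1 + t) ^ p :=
    (Real.continuous_rpow_const (by linarith)).comp (continuous_const.add continuous_id)
  have c4 : Continuous fun t : ℝ => (1 - t) ^ p :=
    (Real.continuous_rpow_const (by linarith)).comp (continuous_const.sub continuous_id)
  -- h is monotone on [0,1]
  have hmono : MonotoneOn h (Icc (0:ℝ) 1) := by
    apply monotoneOn_of_hasDerivWithinAt_nonneg (f' := fun x =>
        p * (p - 1) * ((1 + x) ^ (p - 2) + (1 - x) ^ (p - 2)) - 2 * p * (p - 1)) (convex_Icc 0 1)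
    · exact (((continuous_const.mul c1).sub (continuous_const.mul c2)).sub
        (continuous_const.mul continuous_id)).continuousOn
    · intro x hx
      rw [interior_Icc] at hx
      have hx1 : (0:ℝ) < 1 + x := by linarith [hx.1]
      have hx2 : (0:ℝ) < 1 - x := by linarith [hx.2]
      apply HasDerivAt.hasDerivWithinAt
      have d1 : HasDerivAt (fun t : ℝ => (1 + t) ^ (p - 1)) ((p - 1) * (1 + x) ^ (p - 1 - 1) * 1) x :=
        (Real.hasDerivAt_rpow_const (Or.inl hx1.ne')).comp x ((hasDerivAt_id x).const_add 1)
      have d2 : HasDerivAt (fun t : ℝ => (1 - t) ^ (p - 1)) ((p - 1) * (1 - x) ^ (p - 1 - 1) * (-1)) x :=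
        (Real.hasDerivAt_rpow_const (Or.inl hx2.ne')).comp x ((hasDerivAt_id x).const_sub 1)
      have d3 : HasDerivAt (fun t : ℝ => 2 * p * (p - 1) * t) (2 * p * (p - 1)) x := by
        simpa using (hasDerivAt_id x).const_mul (2 * p * (p - 1))
      have := ((d1.const_mul p).sub (d2.const_mul p)).sub d3
      convert this using 1
      · funext y; simp only [hh, Pi.sub_apply]
      have e : p - 1 - 1 = p - 2 := by ring
      rw [e]; ring
    · intro x hx
      rw [interior_Icc] at hx
      have h2 := two_le_rpow_add_rpow (le_of_lt hx.1) hx.2 (by linarith : p - 2 ≤ 0)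
      nlinarith [mul_nonneg (mul_nonneg hp0.le (by linarith : (0:ℝ) ≤ p - 1))
        (by linarith : (0:ℝ) ≤ (1 + x) ^ (p - 2) + (1 - x) ^ (p - 2) - 2)]
  have h0 : h 0 = 0 := by simp [hh]
  have hnne : ∀ x ∈ Icc (0:ℝ) 1, 0 ≤ h x := fun x hx => by
    have := hmono (left_mem_Icc.mpr zero_le_one) hx hx.1
    rw [h0] at this; exact this
  -- g is monotone on [0,1]
  have gmono : MonotoneOn g (Icc (0:ℝ) 1) := by
    apply monotoneOn_of_hasDerivWithinAt_nonneg (f' := h) (convex_Icc 0 1)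
    · exact ((c3.add c4).sub (continuous_const.add
        (continuous_const.mul (continuous_pow 2)))).continuousOn
    · intro x hx
      rw [interior_Icc] at hx
      have hx1 : (0:ℝ) < 1 + x := by linarith [hx.1]
      have hx2 : (0:ℝ) < 1 - x := by linarith [hx.2]
      apply HasDerivAt.hasDerivWithinAt
      have d1 : HasDerivAt (fun t : ℝ => (1 + t) ^ p) (p * (1 + x) ^ (p - 1) * 1) x :=
        (Real.hasDerivAt_rpow_const (Or.inl hx1.ne')).comp x ((hasDerivAt_id x).const_add 1)
      have d2 : HasDerivAt (fun t : ℝ => (1 - t) ^ p) (p * (1 - x) ^ (p - 1) * (-1)) x :=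
        (Real.hasDerivAt_rpow_const (Or.inl hx2.ne')).comp x ((hasDerivAt_id x).const_sub 1)
      have d3 : HasDerivAt (fun t : ℝ => 2 + p * (p - 1) * t ^ 2) (p * (p - 1) * (2 * x)) x := by
        simpa using (((hasDerivAt_pow 2 x)).const_mul (p * (p - 1))).const_add 2
      have := (d1.add d2).sub d3
      convert this using 1
      · funext y; simp only [hg, Pi.add_apply, Pi.sub_apply]
      simp only [hh]; ring
    · intro x hx
      rw [interior_Icc] at hx
      exact hnne x ⟨hx.1.le, hx.2.le⟩
  have g0 : g 0 = 0 := by norm_num [hg]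
  have := gmono (left_mem_Icc.mpr zero_le_one) ⟨ht0, ht1⟩ ht0
  rw [g0] at this
  simp only [hg] at this
  linarith

lemma rpow_le_tangent {u v r : ℝ} (hu : 0 ≤ u) (hv : 0 < v) (hr0 : 0 < r) (hr1 : r ≤ 1) :
    u ^ r ≤ v ^ r + r * v ^ (r - 1) * (u - v) := by
  have hs : (-1:ℝ) ≤ u / v - 1 := by
    have : 0 ≤ u / v := div_nonneg hu hv.le
    linarith
  have h2 := rpow_one_add_le_one_add_mul_self hs hr0.le hr1
  rw [show (1:ℝ) + (u / v - 1) = u / v by ring] at h2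
  have hvr : v ^ r = v ^ (r - 1) * v := by
    rw [← Real.rpow_add_one hv.ne']; norm_num
  have huv : u = v * (u / v) := by field_simp
  calc u ^ r = (v * (u / v)) ^ r := by rw [← huv]
    _ = v ^ r * (u / v) ^ r := Real.mul_rpow hv.le (div_nonneg hu hv.le)
    _ ≤ v ^ r * (1 + r * (u / v - 1)) :=
        mul_le_mul_of_nonneg_left h2 (Real.rpow_nonneg hv.le r)
    _ = v ^ r + r * v ^ (r - 1) * (u - v) := by
        rw [hvr]; field_simp

lemma sq_rpow_half_mul {m c : ℝ} (hm : 0 < m) (c' : ℝ) (h : 2 * c' = c) :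
    ((m : ℝ) ^ 2) ^ c' = m ^ c := by
  rw [← Real.rpow_natCast m 2, ← Real.rpow_mul hm.le]
  norm_num [← h, mul_comm]

lemma two_point_real_aux {p : ℝ} (hp1 : 1 < p) (hp2 : p < 2) {A B : ℝ} (hB : 0 ≤ B)
    (hBA : B ≤ A) :
    2 * ((p * (A ^ 2 + B ^ 2) + 2 * (2 - p) * (A * B)) / 4) ^ (p / 2) ≤ A ^ p + B ^ p := by
  have hp0 : (0:ℝ) < p := by linarith
  set m : ℝ := (A + B) / 2 with hm
  set d : ℝ := (A - B) / 2 with hd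
  have hd0 : 0 ≤ d := by simp only [hd]; linarith
  have hdm : d ≤ m := by simp only [hm, hd]; linarith
  have hA : A = m + d := by simp only [hm, hd]; ring
  have hB' : B = m - d := by simp only [hm, hd]; ring
  have hins : (p * (A ^ 2 + B ^ 2) + 2 * (2 - p) * (A * B)) / 4 = m ^ 2 + (p - 1) * d ^ 2 := by
    rw [hA, hB']; ring
  rcases eq_or_lt_of_le (le_trans hd0 hdm) with hm0 | hm0
  · -- m = 0 : then A = B = 0
    have hd00 : d = 0 := le_antisymm (hm0 ▸ hdm) hd0
    have hA0 : A = 0 := by rw [hA, ← hm0, hd00]; ring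
    have hB0 : B = 0 := by rw [hB', ← hm0, hd00]; ring
    rw [hA0, hB0]
    rw [Real.zero_rpow hp0.ne']
    norm_num
    rw [Real.zero_rpow (by positivity)]
    norm_num
  · -- m > 0
    have htan := rpow_le_tangent (u := m ^ 2 + (p - 1) * d ^ 2) (v := m ^ 2) (r := p / 2)
      (by nlinarith) (by positivity) (by positivity) (by linarith)
    have e1 : ((m:ℝ) ^ 2) ^ (p / 2) = m ^ p := sq_rpow_half_mul hm0 _ (by ring)
    have e2 : ((m:ℝ) ^ 2) ^ (p / 2 - 1) = m ^ (p - 2) := sq_rpow_half_mul hm0 _ (by ring)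
    rw [e1, e2] at htan
    -- key inequality scaled by m ^ p
    have hk := key_ineq hp1 hp2 (t := d / m) (div_nonneg hd0 hm0.le) ((div_le_one hm0).mpr hdm)
    have hmp : (0:ℝ) < m ^ p := Real.rpow_pos_of_pos hm0 p
    have emul1 : (1 + d / m) ^ p * m ^ p = (m + d) ^ p := by
      rw [← Real.mul_rpow (by positivity) hm0.le]
      congr 1; field_simp
    have emul2 : (1 - d / m) ^ p * m ^ p = (m - d) ^ p := by
      rw [← Real.mul_rpow (by
        have : d / m ≤ 1 := (div_le_one hm0).mpr hdm
        linarith) hm0.le]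
      congr 1; field_simp
    have emul3 : m ^ p * (d / m) ^ 2 = m ^ (p - 2) * d ^ 2 := by
      have em : m ^ p = m ^ (p - 2) * m ^ 2 := by
        rw [← Real.rpow_natCast m 2, ← Real.rpow_add hm0]; norm_num
      rw [em]; field_simp
    have hscaled := mul_le_mul_of_nonneg_right hk hmp.le
    rw [add_mul, add_mul, emul1, emul2] at hscaled
    have e4 : p * (p - 1) * (m ^ p * (d / m) ^ 2) = p * (p - 1) * (m ^ (p - 2) * d ^ 2) := by
      rw [emul3]
    rw [hins, hA, hB']
    linarith [htan, hscaled, e4]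

lemma two_point_real {p : ℝ} (hp1 : 1 < p) (hp2 : p < 2) {A B : ℝ} (hA : 0 ≤ A) (hB : 0 ≤ B) :
    2 * ((p * (A ^ 2 + B ^ 2) + 2 * (2 - p) * (A * B)) / 4) ^ (p / 2) ≤ A ^ p + B ^ p := by
  rcases le_total B A with h | h
  · exact two_point_real_aux hp1 hp2 hB h
  · have := two_point_real_aux hp1 hp2 hA h
    rw [show p * (B ^ 2 + A ^ 2) + 2 * (2 - p) * (B * A)
      = p * (A ^ 2 + B ^ 2) + 2 * (2 - p) * (A * B) by ring] at this
    linarith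

lemma two_point_complex {p : ℝ} (hp1 : 1 < p) (hp2 : p < 2) (a b : ℂ) :
    2 * ((‖a‖ ^ 2 + (p - 1) * ‖b‖ ^ 2) ^ (p / 2)) ≤ ‖a + b‖ ^ p + ‖a - b‖ ^ p := by
  have hsq : ∀ z : ℂ, ‖z‖ ^ 2 = Complex.normSq z := fun z => by
    rw [Complex.sq_norm]
  have hpar : ‖a + b‖ ^ 2 + ‖a - b‖ ^ 2 = 2 * (‖a‖ ^ 2 + ‖b‖ ^ 2) := by
    simp only [hsq, Complex.normSq_apply, Complex.add_re, Complex.add_im, Complex.sub_re,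
      Complex.sub_im]
    ring
  have h1 : ‖a + b‖ ≤ ‖a - b‖ + 2 * ‖b‖ := by
    calc ‖a + b‖ = ‖(a - b) + (b + b)‖ := by ring_nf
      _ ≤ ‖a - b‖ + ‖b + b‖ := norm_add_le _ _
      _ ≤ ‖a - b‖ + 2 * ‖b‖ := by linarith [norm_add_le b b]
  have h2 : ‖a - b‖ ≤ ‖a + b‖ + 2 * ‖b‖ := by
    calc ‖a - b‖ = ‖(a + b) - (b + b)‖ := by ring_nf
      _ ≤ ‖a + b‖ + ‖b + b‖ := norm_sub_le _ _
      _ ≤ ‖a + b‖ + 2 * ‖b‖ := by linarith [norm_add_le b b]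
  have htri : (‖a + b‖ - ‖a - b‖) ^ 2 ≤ 4 * ‖b‖ ^ 2 := by nlinarith [norm_nonneg (a + b), norm_nonneg (a - b), norm_nonneg b]
  have hle : ‖a‖ ^ 2 + (p - 1) * ‖b‖ ^ 2
      ≤ (p * (‖a + b‖ ^ 2 + ‖a - b‖ ^ 2) + 2 * (2 - p) * (‖a + b‖ * ‖a - b‖)) / 4 := by
    nlinarith [mul_nonneg (by linarith : (0:ℝ) ≤ 2 - p)
      (by linarith [htri] : (0:ℝ) ≤ 4 * ‖b‖ ^ 2 - (‖a + b‖ - ‖a - b‖) ^ 2), hpar]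
  calc 2 * ((‖a‖ ^ 2 + (p - 1) * ‖b‖ ^ 2) ^ (p / 2))
      ≤ 2 * (((p * (‖a + b‖ ^ 2 + ‖a - b‖ ^ 2) + 2 * (2 - p) * (‖a + b‖ * ‖a - b‖)) / 4) ^ (p / 2)) := by
        apply mul_le_mul_of_nonneg_left _ (by norm_num)
        apply Real.rpow_le_rpow (by nlinarith [sq_nonneg ‖a‖, sq_nonneg ‖b‖]) hle (by positivity)
    _ ≤ ‖a + b‖ ^ p + ‖a - b‖ ^ p := two_point_real hp1 hp2 (norm_nonneg _) (norm_nonneg _)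

lemma power_mean {p : ℝ} (hp1 : 1 < p) (hp2 : p < 2) {s t : ℝ} (hs : 0 ≤ s) (ht : 0 ≤ t) :
    s ^ p + t ^ p ≤ 2 * (((s ^ 2 + t ^ 2) / 2) ^ (p / 2)) := by
  have hp0 : (0:ℝ) < p := by linarith
  have h := Real.rpow_arith_mean_le_arith_mean_rpow (Finset.univ : Finset (Fin 2))
    ![1/2, 1/2] ![s ^ p, t ^ p] (by intro i _; fin_cases i <;> norm_num)
    (by simp [Fin.sum_univ_two]; norm_num)
    (by intro i _; fin_cases i <;> simp <;> positivity) (p := 2 / p)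
    (by rw [le_div_iff₀ hp0]; linarith)
  simp only [Fin.sum_univ_two, Matrix.cons_val_zero, Matrix.cons_val_one, Matrix.head_cons] at h
  have es : (s ^ p) ^ (2 / p) = s ^ 2 := by
    rw [← Real.rpow_natCast s 2, ← Real.rpow_mul hs]
    congr 1
    field_simp; norm_num
  have et : (t ^ p) ^ (2 / p) = t ^ 2 := by
    rw [← Real.rpow_natCast t 2, ← Real.rpow_mul ht]
    congr 1
    field_simp; norm_num
  rw [es, et] at h
  -- h : (1/2 * s^p + 1/2 * t^p) ^ (2/p) ≤ 1/2 * s^2 + 1/2 * t^2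
  have h2 := Real.rpow_le_rpow (Real.rpow_nonneg (by positivity) _) h (by positivity : (0:ℝ) ≤ p / 2)
  rw [← Real.rpow_mul (by positivity)] at h2
  rw [show 2 / p * (p / 2) = 1 by field_simp, Real.rpow_one] at h2
  rw [show 1/2 * s^2 + 1/2 * t^2 = (s ^ 2 + t ^ 2) / 2 by ring] at h2
  linarith

lemma rpow_sq_rpow {x c : ℝ} (hx : 0 ≤ x) : (x ^ 2) ^ (c / 2) = x ^ c := by
  rw [← Real.rpow_natCast x 2, ← Real.rpow_mul hx]
  congr 1; push_cast; ring

lemma rpow_p_two {x p : ℝ} (hx : 0 ≤ x) (hp : p ≠ 0) : (x ^ p) ^ (2 / p) = x ^ 2 := by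
  rw [← Real.rpow_natCast x 2, ← Real.rpow_mul hx]
  congr 1; push_cast; field_simp

lemma pilp_norm_pair {q : ℝ≥0∞} [Fact (1 ≤ q)] {s : ℝ} (hq : q.toReal = s) (hs : 0 < s)
    (a b : ℝ) (ha : 0 ≤ a) (hb : 0 ≤ b) :
    ‖(WithLp.equiv q (∀ _ : Fin 2, ℝ)).symm ![a, b]‖ = (a ^ s + b ^ s) ^ (1 / s) := by
  rw [PiLp.norm_eq_sum (by rw [hq]; exact hs)]
  rw [hq]
  simp [Fin.sum_univ_two, WithLp.equiv_symm_apply, PiLp.toLp_apply, Real.norm_eq_abs,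
    abs_of_nonneg ha, abs_of_nonneg hb]

lemma main_aux {p : ℝ} (hp1 : 1 < p) (hp2 : p < 2)
    (u v : lp (fun _ : ℕ => ℂ) (ENNReal.ofReal p)) :
    ‖u‖ ^ 2 + (p - 1) * ‖v‖ ^ 2 ≤ (‖u + v‖ ^ 2 + ‖u - v‖ ^ 2) / 2 := by
  have hp0 : (0:ℝ) < p := by linarith
  have hpm1 : (0:ℝ) ≤ p - 1 := by linarith
  haveI : Fact (1 ≤ ENNReal.ofReal p) := ⟨by
    rw [← ENNReal.ofReal_one]
    exact ENNReal.ofReal_le_ofReal hp1.le⟩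
  have htr : (ENNReal.ofReal p).toReal = p := ENNReal.toReal_ofReal hp0.le
  have hq : 0 < (ENNReal.ofReal p).toReal := by rw [htr]; exact hp0
  have hu := lp.hasSum_norm hq u
  have hv := lp.hasSum_norm hq v
  have huv := lp.hasSum_norm hq (u + v)
  have huv' := lp.hasSum_norm hq (u - v)
  rw [htr] at hu hv huv huv'
  have eadd : ∀ n, (u + v) n = u n + v n := fun n => by rw [lp.coeFn_add]; rfl
  have esub : ∀ n, (u - v) n = u n - v n := fun n => by rw [lp.coeFn_sub]; rfl
  -- PiLp machinery for the reverse Minkowski inequality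
  set q2 : ℝ≥0∞ := ENNReal.ofReal (2 / p) with hq2def
  haveI hfact : Fact (1 ≤ q2) := ⟨by
    rw [hq2def, ← ENNReal.ofReal_one]
    exact ENNReal.ofReal_le_ofReal (by rw [le_div_iff₀ hp0]; linarith)⟩
  have hq2 : q2.toReal = 2 / p := ENNReal.toReal_ofReal (by positivity)
  have h2p : (0:ℝ) < 2 / p := by positivity
  set e := PiLp.continuousLinearEquiv q2 ℝ (fun _ : Fin 2 => ℝ) with he
  set w : ℕ → PiLp q2 (fun _ : Fin 2 => ℝ) :=
    fun n => (WithLp.equiv q2 (∀ _ : Fin 2, ℝ)).symm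
      ![‖u n‖ ^ p, ((p - 1) * ‖v n‖ ^ 2) ^ (p / 2)] with hw
  set T : PiLp q2 (fun _ : Fin 2 => ℝ) :=
    (WithLp.equiv q2 (∀ _ : Fin 2, ℝ)).symm
      ![‖u‖ ^ p, (p - 1) ^ (p / 2) * ‖v‖ ^ p] with hT
  have hvn : ∀ z : ℂ, ((p - 1) * ‖z‖ ^ 2) ^ (p / 2) = (p - 1) ^ (p / 2) * ‖z‖ ^ p := by
    intro z
    rw [Real.mul_rpow hpm1 (sq_nonneg _), rpow_sq_rpow (norm_nonneg z)]
  have hpi : HasSum (fun n => ![‖u n‖ ^ p, ((p - 1) * ‖v n‖ ^ 2) ^ (p / 2)] : ℕ → (∀ _ : Fin 2, ℝ))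
      ![‖u‖ ^ p, (p - 1) ^ (p / 2) * ‖v‖ ^ p] := by
    apply Pi.hasSum.mpr
    intro i
    fin_cases i
    · simpa only [Fin.zero_eta, Matrix.cons_val_zero] using hu
    · simp only [Fin.mk_one, Matrix.cons_val_one, Matrix.head_cons, hvn]
      exact hv.mul_left ((p - 1) ^ (p / 2))
  have hsumw : HasSum w T := e.symm.hasSum'.mpr hpi
  -- norms of the PiLp vectors
  have hwnorm : ∀ n, ‖w n‖ = (‖u n‖ ^ 2 + (p - 1) * ‖v n‖ ^ 2) ^ (p / 2) := by
    intro n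
    rw [hw]
    rw [pilp_norm_pair hq2 h2p _ _ (by positivity) (by positivity)]
    rw [hvn]
    rw [Real.mul_rpow (by positivity) (by positivity)]
    rw [rpow_p_two (norm_nonneg (u n)) hp0.ne', rpow_p_two (norm_nonneg (v n)) hp0.ne']
    rw [← Real.rpow_mul hpm1]
    rw [show p / 2 * (2 / p) = 1 by field_simp]
    rw [Real.rpow_one]
    rw [show (1 : ℝ) / (2 / p) = p / 2 by field_simp]
  have hTnorm : ‖T‖ = (‖u‖ ^ 2 + (p - 1) * ‖v‖ ^ 2) ^ (p / 2) := by
    rw [hT]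
    rw [pilp_norm_pair hq2 h2p _ _ (by positivity)
      (mul_nonneg (by positivity) (by positivity))]
    rw [Real.mul_rpow (by positivity) (by positivity)]
    rw [rpow_p_two (norm_nonneg u) hp0.ne', rpow_p_two (norm_nonneg v) hp0.ne']
    rw [← Real.rpow_mul hpm1]
    rw [show p / 2 * (2 / p) = 1 by field_simp]
    rw [Real.rpow_one]
    rw [show (1 : ℝ) / (2 / p) = p / 2 by field_simp]
  -- pointwise bound and summability
  have hbound : ∀ n, ‖w n‖ ≤ (‖u n + v n‖ ^ p + ‖u n - v n‖ ^ p) / 2 := by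
    intro n
    rw [hwnorm n]
    have := two_point_complex hp1 hp2 (u n) (v n)
    linarith
  have hS2 : Summable fun n => (‖u n + v n‖ ^ p + ‖u n - v n‖ ^ p) / 2 := by
    have := (huv.summable.add huv'.summable).div_const 2
    simpa [eadd, esub] using this
  have hsumnorm : Summable fun n => ‖w n‖ :=
    Summable.of_nonneg_of_le (fun n => norm_nonneg _) hbound hS2
  have htsum2 : ∑' n, ((‖u n + v n‖ ^ p + ‖u n - v n‖ ^ p) / 2)
      = (‖u + v‖ ^ p + ‖u - v‖ ^ p) / 2 := by
    have := ((huv.add huv').div_const 2).tsum_eq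
    simpa [eadd, esub] using this
  have step1 : (‖u‖ ^ 2 + (p - 1) * ‖v‖ ^ 2) ^ (p / 2) ≤ ∑' n, ‖w n‖ := by
    rw [← hTnorm, ← hsumw.tsum_eq]
    exact norm_tsum_le_tsum_norm hsumnorm
  have step2 : ∑' n, ‖w n‖ ≤ (‖u + v‖ ^ p + ‖u - v‖ ^ p) / 2 := by
    rw [← htsum2]
    exact Summable.tsum_le_tsum hbound hsumnorm hS2
  have step3 : (‖u + v‖ ^ p + ‖u - v‖ ^ p) / 2
      ≤ ((‖u + v‖ ^ 2 + ‖u - v‖ ^ 2) / 2) ^ (p / 2) := by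
    have := power_mean hp1 hp2 (norm_nonneg (u + v)) (norm_nonneg (u - v))
    linarith
  have hN : (0:ℝ) ≤ ‖u‖ ^ 2 + (p - 1) * ‖v‖ ^ 2 := by
    have := mul_nonneg hpm1 (sq_nonneg ‖v‖)
    nlinarith [sq_nonneg ‖u‖]
  have hM : (0:ℝ) ≤ (‖u + v‖ ^ 2 + ‖u - v‖ ^ 2) / 2 := by positivity
  exact (Real.rpow_le_rpow_iff hN hM (by positivity : (0:ℝ) < p / 2)).mp
    (step1.trans (step2.trans step3))

end BynumDrewAux

theorem bynum_drew (p : ℝ) (hp1 : 1 < p) (hp2 : p < 2)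
    (x y : lp (fun _ : ℕ => ℂ) (ENNReal.ofReal p)) :
    ‖x + y‖ ^ 2 + (p - 1) * ‖x - y‖ ^ 2 ≤ 2 * (‖x‖ ^ 2 + ‖y‖ ^ 2) := by
  have key := BynumDrewAux.main_aux hp1 hp2 (x + y) (x - y)
  have e1 : (x + y) + (x - y) = (2:ℂ) • x := by
    rw [two_smul]; abel
  have e2 : (x + y) - (x - y) = (2:ℂ) • y := by
    rw [two_smul]; abel
  have hpne : (ENNReal.ofReal p) ≠ 0 := by
    simp only [ne_eq, ENNReal.ofReal_eq_zero, not_le]; linarith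
  have h2 : ‖(2:ℂ)‖ = 2 := by norm_num
  have n1 : ‖(x + y) + (x - y)‖ = 2 * ‖x‖ := by
    rw [e1, lp.norm_const_smul hpne, h2]
  have n2 : ‖(x + y) - (x - y)‖ = 2 * ‖y‖ := by
    rw [e2, lp.norm_const_smul hpne, h2]
  rw [n1, n2] at key
  nlinarith [key]
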